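/- Let a → e → b →^h Σa be a distinguished triangle in T with a indecomposable and b = b1 ⊕ ⋯ ⊕ bn a finite direct sum of indecomposable objects, where h = (h1, …, hn). Then there exist indecomposable objects b'1, …, b'k, a morphism h' = (h'1, …, h'k) : b' := b'1 ⊕ ⋯ ⊕ b'k → Σa whose components h'1, …, h'k are pairwise factorization free, and objects b'' and e' such that b' ⊕ b'' ≅ b and there is an isomorphism of distinguished triangles, which is the identity on a and on Σa, between the triangle a → e' ⊕ b'' → b' ⊕ b'' →^{(h',0)} Σa and the given triangle a → e → b →^h Σa. -/

import Mathlib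

/-!
STATEMENT 1: In a K-linear, Hom-finite, Krull–Schmidt triangulated category T whose
Hom-spaces are at most one-dimensional, every distinguished triangle
a → e → b →ʰ Σa with a indecomposable and b = b₁ ⊕ ⋯ ⊕ bₙ a finite direct sum of
indecomposables is isomorphic (via an isomorphism of distinguished triangles which is the
identity on a, hence also on Σa) to a triangle a → e' ⊕ b'' → b' ⊕ b'' →⁽ʰ'،⁰⁾ Σa where
b' = b'₁ ⊕ ⋯ ⊕ b'ₖ is a direct summand of b with the b'ᵢ indecomposable and the
components h'ᵢ of h' pairwise factorization free.
-/

open CategoryTheory Limits Pretriangulated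

universe v u

/-- An object of an additive category is indecomposable if it is nonzero and in any
decomposition as a biproduct one of the two factors is zero. -/
def IsIndecomposable {T : Type u} [Category.{v} T] [Preadditive T] [HasZeroObject T]
    [HasFiniteBiproducts T] [HasBinaryBiproducts T] (X : T) : Prop :=
  ¬ IsZero X ∧ ∀ (Y Z : T), Nonempty (X ≅ Y ⊞ Z) → IsZero Y ∨ IsZero Z

/-- Two morphisms `f₁ : x₁ ⟶ y` and `f₂ : x₂ ⟶ y` are factorization free if there is no
`g : x₁ ⟶ x₂` with `f₁ = f₂ ∘ g` and no `h : x₂ ⟶ x₁` with `f₂ = f₁ ∘ h`. -/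
def FactorizationFree {T : Type u} [Category.{v} T] {x₁ x₂ y : T}
    (f₁ : x₁ ⟶ y) (f₂ : x₂ ⟶ y) : Prop :=
  (¬ ∃ g : x₁ ⟶ x₂, f₁ = g ≫ f₂) ∧ (¬ ∃ h : x₂ ⟶ x₁, f₂ = h ≫ f₁)

/-- A Krull–Schmidt category: every object is a finite direct sum of objects with local
endomorphism rings. -/
def IsKrullSchmidt (T : Type u) [Category.{v} T] [Preadditive T] [HasZeroObject T]
    [HasFiniteBiproducts T] : Prop :=
  ∀ X : T, ∃ (n : ℕ) (Y : Fin n → T),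
    (∀ i, IsLocalRing (End (Y i))) ∧ Nonempty (X ≅ ⨁ Y)


section AuxiliaryLemmas

open ZeroObject

variable {T : Type u} [Category.{v} T] [Preadditive T] [HasZeroObject T]
    [HasFiniteBiproducts T] [HasBinaryBiproducts T]

/-- Decompose a biproduct over `Fin (n+1)` as the biproduct over the complement of `i`
plus the `i`-th factor. -/
noncomputable def biproductSuccAboveIso {n : ℕ} (b : Fin (n+1) → T) (i : Fin (n+1)) :
    (⨁ b) ≅ (⨁ fun t : Fin n => b (i.succAbove t)) ⊞ b i where
  hom := biprod.lift (biproduct.lift fun t => biproduct.π b (i.succAbove t)) (biproduct.π b i)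
  inv := biprod.desc (biproduct.desc fun t => biproduct.ι b (i.succAbove t)) (biproduct.ι b i)
  hom_inv_id := by
    rw [biprod.lift_desc, biproduct.lift_desc, ← biproduct.total,
      Fin.sum_univ_succAbove (fun m => biproduct.π b m ≫ biproduct.ι b m) i]
    abel
  inv_hom_id := by
    ext
    · rename_i t t'
      by_cases ht : t = t'
      · subst ht; simp
      · have : i.succAbove t ≠ i.succAbove t' := fun hh => ht (Fin.succAbove_right_injective hh)
        simp [biproduct.ι_π_ne _ this, biproduct.ι_π_ne _ ht]
    · rename_i t
      simp [biproduct.ι_π_ne _ (Fin.succAbove_ne i t)]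
    · rename_i t
      simp [biproduct.ι_π_ne _ (Fin.succAbove_ne i t).symm]
    · simp

/-- Case of `extract_factorization_free` where the components are already pairwise
factorization free. -/
lemma extract_ff_base (s : T) {n : ℕ} (b : Fin n → T)
    (hind : ∀ i, IsIndecomposable (b i)) (h : (⨁ b) ⟶ s)
    (hff : ∀ i j, i ≠ j →
      FactorizationFree (biproduct.ι b i ≫ h) (biproduct.ι b j ≫ h)) :
    ∃ (k : ℕ) (b' : Fin k → T) (_ : ∀ i, IsIndecomposable (b' i)) (h' : ∀ i, b' i ⟶ s)
      (_ : ∀ i j, i ≠ j → FactorizationFree (h' i) (h' j)) (b'' : T)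
      (ψ : (⨁ b) ≅ (⨁ b') ⊞ b''),
      ψ.hom ≫ biprod.desc (biproduct.desc h') 0 = h := by
  refine ⟨n, b, hind, fun i => biproduct.ι b i ≫ h, hff, 0,
    ⟨biprod.lift (𝟙 _) 0, biprod.fst, by simp, ?_⟩, ?_⟩
  · apply biprod.hom_ext
    · simp
    · apply (isZero_zero T).eq_of_tgt
  · rw [biprod.lift_desc]
    simp only [Category.id_comp, zero_comp, add_zero]
    ext j
    simp

/-- Key combinatorial step: any morphism `⨁ b ⟶ s` with indecomposable summands `b i`
can be rewritten, after an isomorphism of `⨁ b`, as `(h', 0)` where the components of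
`h'` are pairwise factorization free and indecomposable summands of `b`. -/
lemma extract_factorization_free (s : T) :
    ∀ (n : ℕ) (b : Fin n → T) (_ : ∀ i, IsIndecomposable (b i)) (h : (⨁ b) ⟶ s),
    ∃ (k : ℕ) (b' : Fin k → T) (_ : ∀ i, IsIndecomposable (b' i)) (h' : ∀ i, b' i ⟶ s)
      (_ : ∀ i j, i ≠ j → FactorizationFree (h' i) (h' j)) (b'' : T)
      (ψ : (⨁ b) ≅ (⨁ b') ⊞ b''),
      ψ.hom ≫ biprod.desc (biproduct.desc h') 0 = h := by
  intro n
  induction n with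
  | zero => intro b hind h; exact extract_ff_base s b hind h (fun i => i.elim0)
  | succ m ih =>
    intro b hind h
    by_cases hff : ∀ i j, i ≠ j →
        FactorizationFree (biproduct.ι b i ≫ h) (biproduct.ι b j ≫ h)
    · exact extract_ff_base s b hind h hff
    · push_neg at hff
      obtain ⟨i, j, hij, hnff⟩ := hff
      have hpq : ∃ (p q : Fin (m+1)) (_ : p ≠ q) (c : b p ⟶ b q),
          biproduct.ι b p ≫ h = c ≫ (biproduct.ι b q ≫ h) := by
        unfold FactorizationFree at hnff
        rcases not_and_or.mp hnff with h1 | h1 <;> rw [not_not] at h1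
        · obtain ⟨c, hc⟩ := h1; exact ⟨i, j, hij, c, hc⟩
        · obtain ⟨c, hc⟩ := h1; exact ⟨j, i, hij.symm, c, hc⟩
      obtain ⟨p, q, hpq, c, hc⟩ := hpq
      set x : (⨁ b) ⟶ (⨁ b) := biproduct.π b p ≫ c ≫ biproduct.ι b q with hx
      have hxx : x ≫ x = 0 := by
        rw [hx]
        simp [biproduct.ι_π_ne_assoc _ (Ne.symm hpq)]
      set θh : (⨁ b) ⟶ (⨁ b) := 𝟙 _ - x with hθh
      set θi : (⨁ b) ⟶ (⨁ b) := 𝟙 _ + x with hθi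
      have hθ1 : θh ≫ θi = 𝟙 _ := by
        rw [hθh, hθi]
        simp only [Preadditive.sub_comp, Preadditive.comp_add, Category.id_comp,
          Category.comp_id, hxx]
        abel
      have hθ2 : θi ≫ θh = 𝟙 _ := by
        rw [hθh, hθi]
        simp only [Preadditive.add_comp, Preadditive.comp_sub, Category.id_comp,
          Category.comp_id, hxx]
        abel
      set h1 : (⨁ b) ⟶ s := θh ≫ h with hh1
      have hι_p : biproduct.ι b p ≫ h1 = 0 := by
        rw [hh1, hθh]
        simp only [Preadditive.sub_comp, Preadditive.comp_sub, Category.id_comp, hx,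
          ← Category.assoc, biproduct.ι_π_self]
        rw [Category.assoc, ← hc, sub_self]
      have hι_other : ∀ t : Fin m,
          biproduct.ι b (p.succAbove t) ≫ h1 = biproduct.ι b (p.succAbove t) ≫ h := by
        intro t
        rw [hh1, hθh]
        simp [hx, biproduct.ι_π_ne_assoc _ (Fin.succAbove_ne p t)]
      obtain ⟨k, b', hind', h', hff', b''0, ψ0, hψ0⟩ :=
        ih (fun t => b (p.succAbove t)) (fun t => hind _)
          (biproduct.desc fun t => biproduct.ι b (p.succAbove t) ≫ h1)
      refine ⟨k, b', hind', h', hff', b''0 ⊞ b p,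
        (⟨θi, θh, hθ2, hθ1⟩ : (⨁ b) ≅ (⨁ b)) ≪≫ biproductSuccAboveIso b p ≪≫
          biprod.mapIso ψ0 (Iso.refl (b p)) ≪≫ biprod.associator _ _ _, ?_⟩
      have ha : (biprod.associator (⨁ b') b''0 (b p)).hom ≫
          biprod.desc (biproduct.desc h') (0 : b''0 ⊞ b p ⟶ s) =
          biprod.desc (biprod.desc (biproduct.desc h') 0) 0 := by
        ext <;> simp [biprod.associator]
      have hb : (biprod.mapIso ψ0 (Iso.refl (b p))).hom ≫
          biprod.desc (biprod.desc (biproduct.desc h') (0 : b''0 ⟶ s)) (0 : b p ⟶ s) =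
          biprod.desc (biproduct.desc fun t => biproduct.ι b (p.succAbove t) ≫ h1) 0 := by
        ext
        · simp [hψ0]
        · simp
      have hd : (biproductSuccAboveIso b p).hom ≫
          biprod.desc (biproduct.desc fun t => biproduct.ι b (p.succAbove t) ≫ h1) 0 = h1 := by
        show biprod.lift _ _ ≫ _ = _
        rw [biprod.lift_desc, comp_zero, add_zero, biproduct.lift_desc]
        have htot := congrArg (fun z => z ≫ h1) (biproduct.total (f := b))
        simp only [Preadditive.sum_comp, Category.id_comp, Category.assoc] at htot
        rw [Fin.sum_univ_succAbove
          (fun m' => biproduct.π b m' ≫ (biproduct.ι b m' ≫ h1)) p, hι_p] at htot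
        simpa using htot
      simp only [Iso.trans_hom, Category.assoc, ha, hb, hd]
      show θi ≫ θh ≫ h = h
      rw [← Category.assoc, hθ2, Category.id_comp]

variable [HasShift T ℤ] [∀ n : ℤ, (shiftFunctor T n).Additive] [Pretriangulated T]

/-- The direct sum of a distinguished triangle with the contractible triangle
`0 ⟶ W ⟶ W ⟶ 0` is distinguished. -/
lemma biprodTriangle_dist {X Y Z : T} (W : T) (f : X ⟶ Y) (g : Y ⟶ Z) (h : Z ⟶ X⟦(1:ℤ)⟧)
    (hT : Triangle.mk f g h ∈ distTriang T) :
    Triangle.mk (f ≫ biprod.inl) (biprod.map g (𝟙 W)) (biprod.desc h 0) ∈ distTriang T := by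
  let T₁ : Triangle T := Triangle.mk f g h
  let T₂ : Triangle T := Triangle.mk (0 : (0 : T) ⟶ W) (𝟙 W) 0
  have hT₂ : T₂ ∈ distTriang T := contractible_distinguished₁ W
  let Tp : WalkingPair → Triangle T := fun j => WalkingPair.casesOn j T₁ T₂
  have hTp : ∀ j, Tp j ∈ distTriang T := fun j => by cases j <;> [exact hT; exact hT₂]
  let Tsum : Triangle T :=
    Triangle.mk (f ≫ biprod.inl) (biprod.map g (𝟙 W)) (biprod.desc h 0)
  let p₁ : Tsum ⟶ T₁ :=
    { hom₁ := 𝟙 X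
      hom₂ := biprod.fst
      hom₃ := biprod.fst
      comm₁ := by simp [Triangle.mk, Tsum, T₁]
      comm₂ := by simp [Triangle.mk, Tsum, T₁]
      comm₃ := by
        dsimp [Triangle.mk, Tsum, T₁]
        ext <;> simp }
  let p₂ : Tsum ⟶ T₂ :=
    { hom₁ := 0
      hom₂ := biprod.snd
      hom₃ := biprod.snd
      comm₁ := by (unfold Tsum T₂ Triangle.mk; simp)
      comm₂ := by simp [Triangle.mk, Tsum, T₂]
      comm₃ := by
        unfold Tsum T₂ Triangle.mk
        simp }
  let φ' : Tsum ⟶ productTriangle Tp :=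
    productTriangle.lift Tp (fun j => WalkingPair.casesOn j p₁ p₂)
  have h1 : IsIso φ'.hom₁ := by
    refine ⟨Pi.π _ WalkingPair.left, ?_, ?_⟩
    · exact Pi.lift_π _ _
    · apply Pi.hom_ext
      rintro (_ | _)
      · erw [Category.assoc, Pi.lift_π]
        exact (Category.comp_id _).trans (Category.id_comp _).symm
      · apply (isZero_zero T).eq_of_tgt
  have h2 : IsIso φ'.hom₂ := by
    refine ⟨biprod.lift (Pi.π _ WalkingPair.left) (Pi.π _ WalkingPair.right), ?_, ?_⟩
    · apply biprod.hom_ext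
      · erw [Category.assoc, biprod.lift_fst, Pi.lift_π, Category.id_comp]
      · erw [Category.assoc, biprod.lift_snd, Pi.lift_π, Category.id_comp]
    · apply Pi.hom_ext
      rintro (_ | _)
      · erw [Category.assoc, Pi.lift_π, Category.id_comp]
        exact biprod.lift_fst _ _
      · erw [Category.assoc, Pi.lift_π, Category.id_comp]
        exact biprod.lift_snd _ _
  have h3 : IsIso φ'.hom₃ := by
    refine ⟨biprod.lift (Pi.π _ WalkingPair.left) (Pi.π _ WalkingPair.right), ?_, ?_⟩
    · apply biprod.hom_ext
      · erw [Category.assoc, biprod.lift_fst, Pi.lift_π, Category.id_comp]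
      · erw [Category.assoc, biprod.lift_snd, Pi.lift_π, Category.id_comp]
    · apply Pi.hom_ext
      rintro (_ | _)
      · erw [Category.assoc, Pi.lift_π, Category.id_comp]
        exact biprod.lift_fst _ _
      · erw [Category.assoc, Pi.lift_π, Category.id_comp]
        exact biprod.lift_snd _ _
  have : IsIso φ' := Triangle.isIso_of_isIsos φ' h1 h2 h3
  exact isomorphic_distinguished _ (productTriangle_distinguished Tp hTp) _ (asIso φ')

end AuxiliaryLemmas

theorem triangle_decomposition
    {K : Type*} [Field K] {T : Type u} [Category.{v} T] [Preadditive T] [Linear K T]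
    [HasZeroObject T] [HasFiniteBiproducts T] [HasBinaryBiproducts T] [HasShift T ℤ]
    [∀ n : ℤ, (shiftFunctor T n).Additive] [Pretriangulated T]
    [∀ X Y : T, FiniteDimensional K (X ⟶ Y)]
    (hKS : IsKrullSchmidt T)
    (hdim : ∀ X Y : T, Module.finrank K (X ⟶ Y) ≤ 1)
    (a e : T) {n : ℕ} (b : Fin n → T)
    (ha : IsIndecomposable a) (hb : ∀ i, IsIndecomposable (b i))
    (f : a ⟶ e) (g : e ⟶ ⨁ b) (h : (⨁ b) ⟶ a⟦(1:ℤ)⟧)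
    (hT : Triangle.mk f g h ∈ distTriang T) :
    ∃ (k : ℕ) (b' : Fin k → T) (_ : ∀ i, IsIndecomposable (b' i))
      (h' : ∀ i, b' i ⟶ a⟦(1:ℤ)⟧)
      (_ : ∀ i j, i ≠ j → FactorizationFree (h' i) (h' j))
      (b'' e' : T) (f' : a ⟶ e' ⊞ b'') (g' : e' ⊞ b'' ⟶ (⨁ b') ⊞ b'')
      (_ : Triangle.mk f' g' (biprod.desc (biproduct.desc h') 0) ∈ distTriang T)
      (φ : Triangle.mk f' g' (biprod.desc (biproduct.desc h') 0) ≅ Triangle.mk f g h),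
      φ.hom.hom₁ = 𝟙 a := by
  obtain ⟨k, b', hind', h', hff', b'', ψ, hψ⟩ :=
    extract_factorization_free (a⟦(1:ℤ)⟧) n b hb h
  -- The triangle `a ⟶ e ⟶ (⨁ b') ⊞ b''` obtained by transporting along `ψ`.
  have hdesc : biprod.desc (biproduct.desc h') 0 = ψ.inv ≫ h := by
    rw [← hψ, Iso.inv_hom_id_assoc]
  let T₂ : Triangle T := Triangle.mk f (g ≫ ψ.hom) (biprod.desc (biproduct.desc h') 0)
  let e₂ : T₂ ≅ Triangle.mk f g h :=
    Triangle.isoMk _ _ (Iso.refl a) (Iso.refl e) ψ.symm (by simp [Triangle.mk, T₂]) (by simp [Triangle.mk, T₂])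
      (by dsimp [Triangle.mk, T₂]; rw [hdesc]; simp)
  have hT₂ : T₂ ∈ distTriang T := isomorphic_distinguished _ hT _ e₂
  -- A distinguished triangle over `biproduct.desc h'` and its direct sum with `b''`.
  obtain ⟨e₀, f₀, g₀, hT₃⟩ := distinguished_cocone_triangle₂ (biproduct.desc h' : (⨁ b') ⟶ _)
  have hTsum := biprodTriangle_dist b'' f₀ g₀ (biproduct.desc h') hT₃
  -- Complete `(𝟙 a, ?, 𝟙)` to a morphism of triangles, necessarily an isomorphism.
  obtain ⟨bm, hbm1, hbm2⟩ := complete_distinguished_triangle_morphism₂ _ _ hTsum hT₂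
    (𝟙 a) (𝟙 _) (by simp [Triangle.mk, T₂])
  let φm : Triangle.mk (f₀ ≫ biprod.inl) (biprod.map g₀ (𝟙 b''))
      (biprod.desc (biproduct.desc h') 0) ⟶ T₂ :=
    { hom₁ := 𝟙 a
      hom₂ := bm
      hom₃ := 𝟙 _
      comm₁ := hbm1
      comm₂ := hbm2
      comm₃ := by simp [Triangle.mk, T₂] }
  have : IsIso φm.hom₁ := IsIso.id _
  have : IsIso φm.hom₃ := IsIso.id _
  have : IsIso φm.hom₂ := isIso₂_of_isIso₁₃ φm hTsum hT₂ ‹_› ‹_›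
  have : IsIso φm := Triangle.isIso_of_isIsos φm ‹_› ‹_› ‹_›
  refine ⟨k, b', hind', h', hff', b'', e₀, f₀ ≫ biprod.inl, biprod.map g₀ (𝟙 b''),
    hTsum, asIso φm ≪≫ e₂, ?_⟩
  exact Category.id_comp _
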